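/- arXiv:1610.00853 — 2 statements merged into one kernel-verified Lean document; each statement's English description precedes it below -/
import Mathlib

section
/- Let G be a connected (2K_2, C_3, C_4)-free graph (a connected finite simple graph with no induced 2K_2, no induced C_3 and no induced C_4) and let S be a minimal vertex separator of G with |S| > 1. Then G − S has exactly one trivial component, i.e., exactly one connected component of G − S consists of a single vertex. -/
variable {V : Type*}

/-- The graph `G − S`: delete the vertices of `S` (they become isolated). -/
def SimpleGraph.removeVerts (G : SimpleGraph V) (S : Set V) : SimpleGraph V where
  Adj u v := G.Adj u v ∧ u ∉ S ∧ v ∉ S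
  symm := ⟨fun u v ⟨h, hu, hv⟩ => ⟨h.symm, hv, hu⟩⟩
  loopless := ⟨fun u ⟨h, _, _⟩ => G.loopless.irrefl u h⟩

/-- `S` is a minimal vertex separator of `G`: some `a, b ∉ S` lie in different
connected components of `G − S`, while for every proper subset `S' ⊊ S` they lie
in the same connected component of `G − S'`. -/
def SimpleGraph.IsMinSep (G : SimpleGraph V) (S : Set V) : Prop :=
  ∃ a b : V, a ∉ S ∧ b ∉ S ∧ ¬ (G.removeVerts S).Reachable a b ∧
    ∀ S' : Set V, S' ⊂ S → (G.removeVerts S').Reachable a b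

/-- `C` is (the vertex set of) a connected component of `G − S`. -/
def SimpleGraph.IsCompOf (G : SimpleGraph V) (S : Set V) (C : Set V) : Prop :=
  ∃ u : V, u ∉ S ∧ C = {v : V | (G.removeVerts S).Reachable u v ∧ v ∉ S}

/-- `G` has no induced `2K₂`. -/
def SimpleGraph.TwoK2Free (G : SimpleGraph V) : Prop :=
  ¬ ∃ a b c d : V, a ≠ b ∧ a ≠ c ∧ a ≠ d ∧ b ≠ c ∧ b ≠ d ∧ c ≠ d ∧
    G.Adj a b ∧ G.Adj c d ∧ ¬ G.Adj a c ∧ ¬ G.Adj a d ∧ ¬ G.Adj b c ∧ ¬ G.Adj b d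

/-- `G` has an induced cycle on `k` vertices, all of them lying in `A`. -/
def SimpleGraph.HasInducedCycleOn (G : SimpleGraph V) (A : Set V) (k : ℕ) [NeZero k] : Prop :=
  ∃ f : Fin k → V, Function.Injective f ∧ (∀ i, f i ∈ A) ∧
    ∀ i j : Fin k, G.Adj (f i) (f j) ↔ (j = i + 1 ∨ i = j + 1)

/-- `G` has no induced cycle on `k` vertices. -/
def SimpleGraph.CkFree (G : SimpleGraph V) (k : ℕ) [NeZero k] : Prop :=
  ¬ G.HasInducedCycleOn Set.univ k

/-- `F` is a feedback vertex set of `G`: `G − F` contains no cycle. -/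
def SimpleGraph.IsFVS (G : SimpleGraph V) (F : Set V) : Prop :=
  (G.removeVerts F).IsAcyclic

/-- The minimum cardinality of a feedback vertex set of `G`. -/
noncomputable def SimpleGraph.minFVS (G : SimpleGraph V) : ℕ :=
  sInf {n : ℕ | ∃ F : Set V, G.IsFVS F ∧ F.ncard = n}

-- induced C3 from triangle
lemma triangleC3 (G : SimpleGraph V) {a s t : V} (h1 : G.Adj a s) (h2 : G.Adj s t)
    (h3 : G.Adj a t) : G.HasInducedCycleOn Set.univ 3 := by
  have n1 : a ≠ s := h1.ne
  have n2 : s ≠ t := h2.ne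
  have n3 : a ≠ t := h3.ne
  refine ⟨![a, s, t], ?_, fun i => Set.mem_univ _, ?_⟩
  · intro i j hij
    fin_cases i <;> fin_cases j <;> simp_all
  · intro i j
    fin_cases i <;> fin_cases j <;>
      simp_all [h1.symm, h2.symm, h3.symm, G.irrefl]

lemma squareC4 (G : SimpleGraph V) {a b c d : V} (hab : G.Adj a b) (hbc : G.Adj b c)
    (hcd : G.Adj c d) (hda : G.Adj d a) (hac : ¬ G.Adj a c) (hbd : ¬ G.Adj b d)
    (hacn : a ≠ c) (hbdn : b ≠ d) : G.HasInducedCycleOn Set.univ 4 := by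
  have hca : ¬ G.Adj c a := fun h => hac h.symm
  have hdb : ¬ G.Adj d b := fun h => hbd h.symm
  have n1 : a ≠ b := hab.ne
  have n2 : b ≠ c := hbc.ne
  have n3 : c ≠ d := hcd.ne
  have n4 : d ≠ a := hda.ne
  refine ⟨![a, b, c, d], ?_, fun i => Set.mem_univ _, ?_⟩
  · intro i j hij
    fin_cases i <;> fin_cases j <;> simp_all
  · intro i j
    fin_cases i <;> fin_cases j <;>
      simp_all [hab.symm, hbc.symm, hcd.symm, hda.symm, G.irrefl]

-- along a walk avoiding S \ {s}, if not reachable avoiding S, find a neighbor of s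
lemma walk_neighbor (G : SimpleGraph V) (S : Set V) (s : V) :
    ∀ {a b : V}, (G.removeVerts (S \ {s})).Walk a b → a ∉ S →
      ¬ (G.removeVerts S).Reachable a b →
      ∃ x, (G.removeVerts S).Reachable a x ∧ x ∉ S ∧ G.Adj x s := by
  intro a b p
  induction p with
  | nil => intro _ hr; exact absurd (SimpleGraph.Reachable.refl _) hr
  | @cons a c b h p ih =>
    intro ha hr
    obtain ⟨hadj, -, hc⟩ := h
    by_cases hcs : c = s
    · exact ⟨a, SimpleGraph.Reachable.refl _, ha, hcs ▸ hadj⟩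
    · have hc' : c ∉ S := fun hcS => hc ⟨hcS, hcs⟩
      have hedge : (G.removeVerts S).Adj a c := ⟨hadj, ha, hc'⟩
      have hr' : ¬ (G.removeVerts S).Reachable c b := fun h' => hr (hedge.reachable.trans h')
      obtain ⟨x, hx1, hx2, hx3⟩ := ih hc' hr'
      exact ⟨x, hedge.reachable.trans hx1, hx2, hx3⟩

-- every vertex of a minimal separator has a neighbor in the component of a
lemma sep_neighbor (G : SimpleGraph V) (S : Set V) {a b s : V} (hs : s ∈ S) (ha : a ∉ S)
    (hnr : ¬ (G.removeVerts S).Reachable a b)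
    (hmin : ∀ S' : Set V, S' ⊂ S → (G.removeVerts S').Reachable a b) :
    ∃ x, (G.removeVerts S).Reachable a x ∧ x ∉ S ∧ G.Adj x s := by
  have hsub : S \ {s} ⊂ S := Set.sdiff_singleton_ssubset.2 hs
  obtain ⟨p⟩ := hmin _ hsub
  exact walk_neighbor G S s p ha hnr

-- if all neighbors of a are in S, then component of a is {a}
lemma triv_reach (G : SimpleGraph V) (S : Set V) {a : V}
    (htriv : ∀ x, G.Adj a x → x ∈ S) {v : V}
    (h : (G.removeVerts S).Reachable a v) : v = a := by
  obtain ⟨p⟩ := h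
  cases p with
  | nil => rfl
  | cons h p => exact absurd (htriv _ h.1) h.2.2


lemma rv_adj_reachable (G : SimpleGraph V) (S : Set V) {x y : V} (h : G.Adj x y)
    (hx : x ∉ S) (hy : y ∉ S) : (G.removeVerts S).Reachable x y := by
  have : (G.removeVerts S).Adj x y := ⟨h, hx, hy⟩
  exact this.reachable

lemma main_lemma (G : SimpleGraph V) (S : Set V)
    (hconn : G.Connected) (h2k2 : G.TwoK2Free) (hc3 : G.CkFree 3) (hc4 : G.CkFree 4)
    {a b : V} (ha : a ∉ S) (hb : b ∉ S)
    (hnr : ¬ (G.removeVerts S).Reachable a b)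
    (hmin : ∀ S' : Set V, S' ⊂ S → (G.removeVerts S').Reachable a b)
    (hcard : 1 < S.ncard)
    (htriv : ∀ x, G.Adj a x → x ∈ S) :
    ∃! C : Set V, G.IsCompOf S C ∧ ∃ v, C = {v} := by
  have hnr' : ¬ (G.removeVerts S).Reachable b a := fun h => hnr h.symm
  have hmin' : ∀ S' : Set V, S' ⊂ S → (G.removeVerts S').Reachable b a :=
    fun S' h => (hmin S' h).symm
  -- every vertex of S is adjacent to a
  have hSa : ∀ s ∈ S, G.Adj s a := by
    intro s hs
    obtain ⟨x, hx1, hx2, hx3⟩ := sep_neighbor G S hs ha hnr hmin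
    have hxa : x = a := triv_reach G S htriv hx1
    exact (hxa ▸ hx3).symm
  -- vertices of S are pairwise non-adjacent
  have hSnonadj : ∀ s ∈ S, ∀ t ∈ S, s ≠ t → ¬ G.Adj s t := by
    intro s hs t ht hst hadj
    exact hc3 (triangleC3 G (hSa s hs).symm hadj (hSa t ht).symm)
  have hab_nonadj : ¬ G.Adj a b := fun h => hnr (rv_adj_reachable G S h ha hb)
  have hnab : a ≠ b := fun h => hnr (by rw [h])
  have hSne : S.Nonempty := Set.nonempty_of_ncard_ne_zero (by omega)
  -- b has a neighbor outside S
  have hbnb : ∃ w, G.Adj b w ∧ w ∉ S := by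
    by_contra h
    push_neg at h
    have hSb : ∀ s ∈ S, G.Adj s b := by
      intro s hs
      obtain ⟨x, hx1, hx2, hx3⟩ := sep_neighbor G S hs hb hnr' hmin'
      have hxb : x = b := triv_reach G S h hx1
      exact (hxb ▸ hx3).symm
    obtain ⟨s, hs⟩ := hSne
    obtain ⟨t, ht, hts⟩ := Set.exists_ne_of_one_lt_ncard hcard s
    exact hc4 (squareC4 G (hSa s hs).symm (hSb s hs) (hSb t ht).symm (hSa t ht)
      hab_nonadj (hSnonadj s hs t ht (Ne.symm hts)) hnab (Ne.symm hts))
  have hC0 : {v : V | (G.removeVerts S).Reachable a v ∧ v ∉ S} = {a} :=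
    Set.eq_singleton_iff_unique_mem.2
      ⟨⟨SimpleGraph.Reachable.refl a, ha⟩, fun v hv => triv_reach G S htriv hv.1⟩
  refine ⟨{v : V | (G.removeVerts S).Reachable a v ∧ v ∉ S}, ⟨⟨a, ha, rfl⟩, ⟨a, hC0⟩⟩, ?_⟩
  rintro C ⟨⟨u, hu, rfl⟩, ⟨v, hCv⟩⟩
  -- C = {u}
  have huv : u = v := by
    have : u ∈ {x : V | (G.removeVerts S).Reachable u x ∧ x ∉ S} :=
      ⟨SimpleGraph.Reachable.refl u, hu⟩
    rw [hCv] at this; exact this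
  subst huv
  have hCu : {x : V | (G.removeVerts S).Reachable u x ∧ x ∉ S} = {u} := hCv
  have hutriv : ∀ x, G.Adj u x → x ∈ S := by
    intro x hx
    by_contra hxS
    have hmem : x ∈ {y : V | (G.removeVerts S).Reachable u y ∧ y ∉ S} :=
      ⟨rv_adj_reachable G S hx hu hxS, hxS⟩
    rw [hCu] at hmem
    exact hx.ne (hmem.symm)
  by_cases hau : (G.removeVerts S).Reachable a u
  · have : u = a := triv_reach G S htriv hau
    subst this
    rfl
  · exfalso
    have hune : u ≠ a := fun h => hau (by rw [h])
    -- u is not reachable to b either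
    have hub : ¬ (G.removeVerts S).Reachable u b := by
      intro h
      have hmem : b ∈ {y : V | (G.removeVerts S).Reachable u y ∧ y ∉ S} := ⟨h, hb⟩
      rw [hCu] at hmem
      obtain ⟨w, hw1, hw2⟩ := hbnb
      exact hw2 (hutriv w (hmem ▸ hw1))
    -- u has a neighbor s₀, which is in S
    obtain ⟨s₀, hadj_us⟩ : ∃ x, G.Adj u x := by
      obtain ⟨p⟩ := hconn u a
      cases p with
      | nil => exact absurd rfl hune
      | cons h _ => exact ⟨_, h⟩
    have hs₀ : s₀ ∈ S := hutriv s₀ hadj_us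
    have hna_u : ¬ G.Adj a u := fun h => hau (rv_adj_reachable G S h ha hu)
    -- s₀ is the only neighbor of u
    have honly : ∀ x, G.Adj u x → x = s₀ := by
      intro x hx
      have hxS := hutriv x hx
      by_contra hne
      exact hc4 (squareC4 G (hSa s₀ hs₀).symm hadj_us.symm hx (hSa x hxS)
        hna_u (hSnonadj s₀ hs₀ x hxS (fun h => hne h.symm)) (Ne.symm hune)
        (fun h => hne h.symm))
    -- pick t ∈ S, t ≠ s₀
    obtain ⟨t, ht, hts⟩ := Set.exists_ne_of_one_lt_ncard hcard s₀
    -- t has a neighbor y in the component of b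
    obtain ⟨y, hy1, hy2, hy3⟩ := sep_neighbor G S ht hb hnr' hmin'
    have hay : ¬ G.Adj a y := fun h =>
      hnr ((rv_adj_reachable G S h ha hy2).trans hy1.symm)
    have haney : a ≠ y := fun h => hnr' (h.symm ▸ hy1)
    have hsy : ¬ G.Adj s₀ y := by
      intro h
      exact hc4 (squareC4 G (hSa s₀ hs₀).symm h hy3 (hSa t ht)
        hay (hSnonadj s₀ hs₀ t ht (Ne.symm hts)) haney (Ne.symm hts))
    -- induced 2K₂ on u s₀ t y
    refine h2k2 ⟨u, s₀, t, y, hadj_us.ne, ?_, ?_, Ne.symm hts, ?_, hy3.ne.symm,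
      hadj_us, hy3.symm, ?_, ?_, hSnonadj s₀ hs₀ t ht (Ne.symm hts), hsy⟩
    · exact fun h => hu (h.symm ▸ ht)
    · exact fun h => hub (h.symm ▸ hy1.symm)
    · exact fun h => hy2 (h ▸ hs₀)
    · exact fun h => hts (honly t h)
    · exact fun h => hy2 ((honly y h).symm ▸ hs₀)

theorem stmt1 [Fintype V] (G : SimpleGraph V) (S : Set V)
    (hconn : G.Connected) (h2k2 : G.TwoK2Free) (hc3 : G.CkFree 3) (hc4 : G.CkFree 4)
    (hS : G.IsMinSep S) (hcard : 1 < S.ncard) :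
    ∃! C : Set V, G.IsCompOf S C ∧ ∃ v, C = {v} := by
  obtain ⟨a, b, ha, hb, hnr, hmin⟩ := hS
  by_cases hA : ∀ x, G.Adj a x → x ∈ S
  · exact main_lemma G S hconn h2k2 hc3 hc4 ha hb hnr hmin hcard hA
  · by_cases hB : ∀ x, G.Adj b x → x ∈ S
    · exact main_lemma G S hconn h2k2 hc3 hc4 hb ha (fun h => hnr h.symm)
        (fun S' h => (hmin S' h).symm) hcard hB
    · exfalso
      push_neg at hA hB
      obtain ⟨x, hax, hxS⟩ := hA
      obtain ⟨y, hby, hyS⟩ := hB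
      have hnab : a ≠ b := fun h => hnr (by rw [h])
      have hanb : ¬ G.Adj a b := fun h => hnr (rv_adj_reachable G S h ha hb)
      have hray : ¬ G.Adj a y := fun h =>
        hnr ((rv_adj_reachable G S h ha hyS).trans (rv_adj_reachable G S hby hb hyS).symm)
      have hrxb : ¬ G.Adj x b := fun h =>
        hnr ((rv_adj_reachable G S hax ha hxS).trans (rv_adj_reachable G S h hxS hb))
      have hrxy : ¬ G.Adj x y := fun h =>
        hnr (((rv_adj_reachable G S hax ha hxS).trans (rv_adj_reachable G S h hxS hyS)).trans
          (rv_adj_reachable G S hby hb hyS).symm)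
      have hay : a ≠ y := fun h =>
        hnr (h ▸ (rv_adj_reachable G S hby hb hyS).symm : (G.removeVerts S).Reachable a b)
      have hxb : x ≠ b := fun h =>
        hnr (rv_adj_reachable G S hax ha hxS |>.trans (by rw [h]))
      have hxy : x ≠ y := fun h =>
        hnr ((rv_adj_reachable G S hax ha hxS).trans
          ((h ▸ rv_adj_reachable G S hby hb hyS :
            (G.removeVerts S).Reachable b x).symm))
      exact h2k2 ⟨a, x, b, y, hax.ne, hnab, hay, hxb, hxy, hby.ne,
        hax, hby, hanb, hray, hrxb, hrxy⟩
end

section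
/- Let G be a connected (2K_2, C_3)-free graph (a connected finite simple graph with no induced 2K_2 and no induced C_3), let S be a minimal vertex separator of G with |S| ≥ 2, and let G_1 be a non-trivial connected component of G − S. Let M = { v ∈ V(G_1) : N_G(v) ∩ S = ∅ }. Then the induced subgraph on V(G_1) \ M has no induced path on 4 vertices (it is P_4-free), M is an independent set of G, and there exists a vertex u ∈ V(G_1) \ M that is adjacent to every vertex of M. -/
variable {V : Type*}

section Aux

private lemma two_k2 {G : SimpleGraph V} (h : G.TwoK2Free) {a b c d : V}
    (hab : G.Adj a b) (hcd : G.Adj c d) (hac : ¬G.Adj a c) (had : ¬G.Adj a d)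
    (hbc : ¬G.Adj b c) (hbd : ¬G.Adj b d) (h1 : a ≠ c) (h2 : a ≠ d) (h3 : b ≠ c)
    (h4 : b ≠ d) : False :=
  h ⟨a, b, c, d, hab.ne, h1, h2, h3, h4, hcd.ne, hab, hcd, hac, had, hbc, hbd⟩

private lemma no_tri {G : SimpleGraph V} (hc3 : G.CkFree 3) {a b c : V}
    (hab : G.Adj a b) (hbc : G.Adj b c) (hac : G.Adj a c) : False := by
  apply hc3
  have h1 := hab.ne
  have h2 := hbc.ne
  have h3 := hac.ne
  refine ⟨![a, b, c], ?_, fun _ => Set.mem_univ _, ?_⟩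
  · intro i j hij
    fin_cases i <;> fin_cases j <;> simp_all
  · intro i j
    fin_cases i <;> fin_cases j <;>
      simp [hab, hbc, hac, hab.symm, hbc.symm, hac.symm, G.irrefl]

private lemma walk_decomp {G : SimpleGraph V} {S : Set V} {s : V} {x b : V}
    (w : (G.removeVerts (S \ {s})).Walk x b) :
    b ∉ S →
    (x ∉ S ∧ (G.removeVerts S).Reachable x b) ∨
      ∃ q, q ∉ S ∧ G.Adj s q ∧ (G.removeVerts S).Reachable q b := by
  induction w with
  | nil => exact fun hb => Or.inl ⟨hb, SimpleGraph.Reachable.refl _⟩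
  | @cons x' y b' h w ih =>
    intro hb
    rcases ih hb with ⟨hyS, hyb⟩ | hq
    · by_cases hxS : x' ∈ S
      · have hxs : x' = s := by
          by_contra hne
          exact h.2.1 (Set.mem_diff_singleton.mpr ⟨hxS, hne⟩)
        subst hxs
        exact Or.inr ⟨y, hyS, h.1, hyb⟩
      · have hxy : (G.removeVerts S).Adj x' y := ⟨h.1, hxS, hyS⟩
        exact Or.inl ⟨hxS, hxy.reachable.trans hyb⟩
    · exact Or.inr hq

private lemma sep_nbrs {G : SimpleGraph V} {S : Set V} {s : V} {x b : V}
    (w : (G.removeVerts (S \ {s})).Walk x b) :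
    x ∉ S → b ∉ S → ¬ (G.removeVerts S).Reachable x b →
    ∃ p q, p ∉ S ∧ q ∉ S ∧ G.Adj s p ∧ G.Adj s q ∧
      (G.removeVerts S).Reachable x p ∧ (G.removeVerts S).Reachable q b := by
  induction w with
  | nil => exact fun _ _ hnr => absurd (SimpleGraph.Reachable.refl _) hnr
  | @cons x' y b' h w ih =>
    intro hx hb hnr
    by_cases hyS : y ∈ S
    · have hys : y = s := by
        by_contra hne
        exact h.2.2 (Set.mem_diff_singleton.mpr ⟨hyS, hne⟩)
      subst hys
      rcases walk_decomp w hb with ⟨hyS', _⟩ | ⟨q, hqS, hsq, hqb⟩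
      · exact absurd hyS hyS'
      · exact ⟨x', q, hx, hqS, h.1.symm, hsq, SimpleGraph.Reachable.refl _, hqb⟩
    · have hxy : (G.removeVerts S).Adj x' y := ⟨h.1, hx, hyS⟩
      by_cases hr : (G.removeVerts S).Reachable y b'
      · exact absurd (hxy.reachable.trans hr) hnr
      · obtain ⟨p, q, h1, h2, h3, h4, h5, h6⟩ := ih hyS hb hr
        exact ⟨p, q, h1, h2, h3, h4, hxy.reachable.trans h5, h6⟩

end Aux

theorem stmt15 [Fintype V] (G : SimpleGraph V) (S C M : Set V)
    (hconn : G.Connected) (h2k2 : G.TwoK2Free) (hc3 : G.CkFree 3)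
    (hS : G.IsMinSep S) (hcard : 2 ≤ S.ncard)
    (hC : G.IsCompOf S C) (hnt : ¬ ∃ v, C = {v})
    (hM : M = {v ∈ C | G.neighborSet v ∩ S = ∅}) :
    (¬ ∃ a b c d : V, a ∈ C \ M ∧ b ∈ C \ M ∧ c ∈ C \ M ∧ d ∈ C \ M ∧
      a ≠ b ∧ a ≠ c ∧ a ≠ d ∧ b ≠ c ∧ b ≠ d ∧ c ≠ d ∧
      G.Adj a b ∧ G.Adj b c ∧ G.Adj c d ∧ ¬ G.Adj a c ∧ ¬ G.Adj a d ∧ ¬ G.Adj b d) ∧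
    (∀ u ∈ M, ∀ v ∈ M, ¬ G.Adj u v) ∧
    (∃ u ∈ C \ M, ∀ w ∈ M, G.Adj u w) := by
  classical
  obtain ⟨u₀, hu₀S, hCeq⟩ := hC
  obtain ⟨a₀, b₀, ha₀S, hb₀S, hnr, hmin⟩ := hS
  have memC : ∀ v, v ∈ C ↔ (G.removeVerts S).Reachable u₀ v ∧ v ∉ S := by
    intro v; rw [hCeq]; exact Iff.rfl
  have CnotS : ∀ v, v ∈ C → v ∉ S := fun v hv => ((memC v).1 hv).2
  have C_closed : ∀ p, p ∈ C → ∀ x, G.Adj p x → x ∉ S → x ∈ C := by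
    intro p hp x hadj hx
    have hpx : (G.removeVerts S).Adj p x := ⟨hadj, CnotS p hp, hx⟩
    exact (memC x).2 ⟨((memC p).1 hp).1.trans hpx.reachable, hx⟩
  have cross : ∀ p, p ∈ C → ∀ y, y ∉ C → y ∉ S → ¬ G.Adj p y :=
    fun p hp y hyC hyS hadj => hyC (C_closed p hp y hadj hyS)
  have hu₀C : u₀ ∈ C := (memC u₀).2 ⟨SimpleGraph.Reachable.refl _, hu₀S⟩
  obtain ⟨pa, pb, hpa, hpb, hpab⟩ : ∃ pa pb, pa ∈ C ∧ pb ∈ C ∧ G.Adj pa pb := by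
    obtain ⟨w, hwC, hwne⟩ : ∃ w, w ∈ C ∧ w ≠ u₀ := by
      by_contra h
      push_neg at h
      exact hnt ⟨u₀, Set.eq_singleton_iff_unique_mem.2 ⟨hu₀C, fun w hw => h w hw⟩⟩
    obtain ⟨wk⟩ := ((memC w).1 hwC).1
    cases wk with
    | nil => exact absurd rfl hwne.symm
    | cons h _ => exact ⟨u₀, _, hu₀C, C_closed u₀ hu₀C _ h.1 h.2.2, h.1⟩
  have Sne : S.Nonempty := Set.nonempty_of_ncard_ne_zero (by omega)
  have sep_two : ∀ s ∈ S, ∃ p q, p ∉ S ∧ q ∉ S ∧ G.Adj s p ∧ G.Adj s q ∧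
      (G.removeVerts S).Reachable a₀ p ∧ (G.removeVerts S).Reachable q b₀ := by
    intro s hs
    obtain ⟨w⟩ := hmin (S \ {s}) (Set.sdiff_singleton_ssubset.mpr hs)
    exact sep_nbrs w ha₀S hb₀S hnr
  have out_eq : ∀ y z, y ∉ S → y ∉ C → (G.removeVerts S).Reachable y z → y = z := by
    intro y z hyS hyC hr
    obtain ⟨wk⟩ := hr
    cases wk with
    | nil => rfl
    | cons h _ =>
      exfalso
      rename_i y₁ _
      have hy1S : y₁ ∉ S := h.2.2
      have hy1C : y₁ ∉ C := fun hc => hyC (C_closed y₁ hc y h.1.symm hyS)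
      exact two_k2 h2k2 hpab h.1 (cross pa hpa y hyC hyS) (cross pa hpa y₁ hy1C hy1S)
        (cross pb hpb y hyC hyS) (cross pb hpb y₁ hy1C hy1S)
        (by rintro rfl; exact hyC hpa) (by rintro rfl; exact hy1C hpa)
        (by rintro rfl; exact hyC hpb) (by rintro rfl; exact hy1C hpb)
  have common_nbr : ∀ s ∈ S, ∀ t ∈ S, ∃ y, y ∉ S ∧ y ∉ C ∧ G.Adj s y ∧ G.Adj t y := by
    intro s hs t ht
    obtain ⟨ps, qs, hpsS, hqsS, hsps, hsqs, haps, hqsb⟩ := sep_two s hs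
    obtain ⟨pt, qt, hptS, hqtS, htpt, htqt, hapt, hqtb⟩ := sep_two t ht
    by_cases ha₀C : a₀ ∈ C
    · have hb₀C : b₀ ∉ C :=
        fun hb₀C => hnr (((memC a₀).1 ha₀C).1.symm.trans ((memC b₀).1 hb₀C).1)
      have hqsC : qs ∉ C := fun h => hb₀C ((memC b₀).2 ⟨((memC qs).1 h).1.trans hqsb, hb₀S⟩)
      have heq : qs = qt := out_eq qs qt hqsS hqsC (hqsb.trans hqtb.symm)
      exact ⟨qs, hqsS, hqsC, hsqs, by rw [heq]; exact htqt⟩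
    · have hpsC : ps ∉ C := fun h => ha₀C ((memC a₀).2 ⟨((memC ps).1 h).1.trans haps.symm, ha₀S⟩)
      have heq : ps = pt := out_eq ps pt hpsS hpsC (haps.symm.trans hapt)
      exact ⟨ps, hpsS, hpsC, hsps, by rw [heq]; exact htpt⟩
  have memM : ∀ v, v ∈ M ↔ v ∈ C ∧ G.neighborSet v ∩ S = ∅ := by
    intro v; rw [hM]; exact Iff.rfl
  have M_no_S : ∀ w ∈ M, ∀ s ∈ S, ¬ G.Adj w s := by
    intro w hw s hs hadj
    have hmem : s ∈ G.neighborSet w ∩ S := ⟨hadj, hs⟩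
    rw [((memM w).1 hw).2] at hmem
    exact hmem
  have notM_nbr : ∀ v, v ∈ C → v ∉ M → ∃ s ∈ S, G.Adj v s := by
    intro v hvC hvM
    have hne : G.neighborSet v ∩ S ≠ ∅ := fun h => hvM ((memM v).2 ⟨hvC, h⟩)
    obtain ⟨s, hs1, hs2⟩ := Set.nonempty_iff_ne_empty.2 hne
    exact ⟨s, hs2, hs1⟩
  have M_indep : ∀ u ∈ M, ∀ v ∈ M, ¬ G.Adj u v := by
    intro u hu v hv hadj
    obtain ⟨s, hsS⟩ := Sne
    obtain ⟨y, hyS, hyC, hsy, -⟩ := common_nbr s hsS s hsS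
    have huC := ((memM u).1 hu).1
    have hvC := ((memM v).1 hv).1
    exact two_k2 h2k2 hadj hsy
      (fun h => M_no_S u hu s hsS h) (cross u huC y hyC hyS)
      (fun h => M_no_S v hv s hsS h) (cross v hvC y hyC hyS)
      (by rintro rfl; exact CnotS u huC hsS) (by rintro rfl; exact hyC huC)
      (by rintro rfl; exact CnotS v hvC hsS) (by rintro rfl; exact hyC hvC)
  have M_nbr : ∀ w ∈ M, ∀ x, G.Adj w x → x ∈ C ∧ x ∉ M ∧ ∀ s ∈ S, G.Adj x s := by
    intro w hw x hwx
    have hwC := ((memM w).1 hw).1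
    have hxS : x ∉ S := fun hxS => M_no_S w hw x hxS hwx
    have hxC : x ∈ C := C_closed w hwC x hwx hxS
    have hxs : ∀ s ∈ S, G.Adj x s := by
      intro s hs
      by_contra hxs
      obtain ⟨y, hyS, hyC, hsy, -⟩ := common_nbr s hs s hs
      exact two_k2 h2k2 hwx hsy
        (fun h => M_no_S w hw s hs h) (cross w hwC y hyC hyS)
        hxs (cross x hxC y hyC hyS)
        (by rintro rfl; exact CnotS w hwC hs) (by rintro rfl; exact hyC hwC)
        (by rintro rfl; exact hxS hs) (by rintro rfl; exact hyC hxC)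
    obtain ⟨s, hs⟩ := Sne
    exact ⟨hxC, fun hxM => M_no_S x hxM s hs (hxs s hs), hxs⟩
  have hTne : (C \ M).Nonempty := by
    by_cases hpaM : pa ∈ M
    · exact ⟨pb, hpb, fun hpbM => M_indep pa hpaM pb hpbM hpab⟩
    · exact ⟨pa, hpa, hpaM⟩
  obtain ⟨u, huT, hmax⟩ := Set.Finite.exists_maximalFor
    (fun v => (G.neighborSet v ∩ M).ncard) (C \ M) (Set.toFinite _) hTne
  have claim3 : ∀ w ∈ M, G.Adj u w := by
    intro w hw
    by_contra huw
    have hwu : w ≠ u := by rintro rfl; exact huT.2 hw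
    obtain ⟨x, hwx⟩ : ∃ x, G.Adj w x := by
      obtain ⟨wk⟩ := hconn.preconnected w u
      cases wk with
      | nil => exact absurd rfl hwu
      | cons h _ => exact ⟨_, h⟩
    obtain ⟨hxC, hxM, hxs⟩ := M_nbr w hw x hwx
    obtain ⟨s, hsS⟩ := Sne
    have hsubset : insert w (G.neighborSet u ∩ M) ⊆ G.neighborSet x ∩ M := by
      rintro w' (rfl | ⟨huw', hw'M⟩)
      · exact ⟨hwx.symm, hw⟩
      · have hus : ∀ s' ∈ S, G.Adj u s' := (M_nbr w' hw'M u (SimpleGraph.Adj.symm huw')).2.2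
        have hux : ¬ G.Adj u x := fun h => no_tri hc3 h (hxs s hsS) (hus s hsS)
        by_contra hxw'
        have hxw'' : ¬ G.Adj x w' := fun h => hxw' ⟨h, hw'M⟩
        exact two_k2 h2k2 huw' hwx huw hux
          (fun h => M_indep w' hw'M w hw h) (fun h => hxw'' h.symm)
          (by rintro rfl; exact huT.2 hw) (by rintro rfl; exact huw hwx.symm)
          (by rintro rfl; exact huw huw') (by rintro rfl; exact hxM hw'M)
    have hsub2 : G.neighborSet u ∩ M ⊆ G.neighborSet x ∩ M :=
      fun z hz => hsubset (Set.mem_insert_of_mem _ hz)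
    have hlt : (G.neighborSet u ∩ M).ncard < (G.neighborSet x ∩ M).ncard := by
      refine Set.ncard_lt_ncard ?_ (Set.toFinite _)
      refine (Set.ssubset_iff_of_subset hsub2).2 ⟨w, ⟨hwx.symm, hw⟩, fun h => huw h.1⟩
    exact absurd (hmax ⟨hxC, hxM⟩ hlt.le) (not_le_of_gt hlt)
  refine ⟨?_, M_indep, u, huT, claim3⟩
  rintro ⟨a, b, c, d, haCM, hbCM, hcCM, hdCM, hab_ne, hac_ne, had_ne, hbc_ne, hbd_ne, hcd_ne,
    hab, hbc, hcd, hac, had, hbd⟩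
  obtain ⟨s, hsS, hsa⟩ := notM_nbr a haCM.1 haCM.2
  obtain ⟨t, htS, htd⟩ := notM_nbr d hdCM.1 hdCM.2
  have hsb : ¬ G.Adj s b := fun h => no_tri hc3 hsa.symm hab h
  have hsc : G.Adj s c := by
    by_contra h1
    by_cases h2 : G.Adj s d
    · obtain ⟨y, hyS, hyC, hsy, -⟩ := common_nbr s hsS s hsS
      exact two_k2 h2k2 hsy hbc hsb h1
        (fun h => cross b hbCM.1 y hyC hyS h.symm)
        (fun h => cross c hcCM.1 y hyC hyS h.symm)
        (fun e => CnotS b hbCM.1 (e ▸ hsS)) (fun e => CnotS c hcCM.1 (e ▸ hsS))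
        (by rintro rfl; exact hyC hbCM.1) (by rintro rfl; exact hyC hcCM.1)
    · exact two_k2 h2k2 hsa hcd hac had h1 h2 hac_ne had_ne
        (fun e => CnotS c hcCM.1 (e ▸ hsS)) (fun e => CnotS d hdCM.1 (e ▸ hsS))
  have hsd : ¬ G.Adj s d := fun h => no_tri hc3 hsc hcd h
  have htc : ¬ G.Adj t c := fun h => no_tri hc3 hcd htd h.symm
  have htb : G.Adj t b := by
    by_contra h1
    by_cases h2 : G.Adj t a
    · obtain ⟨z, hzS, hzC, htz, -⟩ := common_nbr t htS t htS
      exact two_k2 h2k2 htz hbc (fun h => h1 h) htc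
        (fun h => cross b hbCM.1 z hzC hzS h.symm)
        (fun h => cross c hcCM.1 z hzC hzS h.symm)
        (fun e => CnotS b hbCM.1 (e ▸ htS)) (fun e => CnotS c hcCM.1 (e ▸ htS))
        (by rintro rfl; exact hzC hbCM.1) (by rintro rfl; exact hzC hcCM.1)
    · exact two_k2 h2k2 htd hab (fun h => had h.symm) (fun h => hbd h.symm) h2 h1
        had_ne.symm hbd_ne.symm
        (fun e => CnotS a haCM.1 (e ▸ htS)) (fun e => CnotS b hbCM.1 (e ▸ htS))
  have hta : ¬ G.Adj t a := fun h => no_tri hc3 h hab htb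
  have hst : G.Adj s t := by
    by_contra h
    exact two_k2 h2k2 hsa.symm htd.symm h hsd (fun h' => hta h'.symm) had
      (by rintro rfl; exact htc hsc) (fun e => CnotS d hdCM.1 (e ▸ hsS))
      (fun e => CnotS a haCM.1 (e ▸ htS)) had_ne
  obtain ⟨y, hyS, hyC, hsy, hty⟩ := common_nbr s hsS t htS
  exact no_tri hc3 hst hty hsy
end
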